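/- arXiv:2107.07196 — 4 statements merged into one kernel-verified Lean document; each statement's English description precedes it below -/
import Mathlib

section
/- Let Γ : ℝ → [0,∞) be bounded with Γ_max = sup Γ, let ω_c, κ > 0, and define Γ₁(ω) = (κ/π)·∫_{−ω_c}^{ω_c} Γ(ν)/((ω−ν)² + κ²) dν. If Γ is differentiable on [−ω_c, ω_c] with Γ'_max = sup_{|ω|≤ω_c}|Γ'(ω)|, then for every ω ∈ [−ω_c, ω_c], |Γ₁(ω) − Γ(ω)| ≤ Γ(ω)·(1 − (1/π)·arctan(|ω−ω_c|/κ) − (1/π)·arctan(|ω+ω_c|/κ)) + (κ·Γ'_max/(2π))·(log(((ω−ω_c)² + κ²)/κ²) + log(((ω+ω_c)² + κ²)/κ²)). -/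
open MeasureTheory

open intervalIntegral


private lemma denom_pos {κ : ℝ} (hκ : 0 < κ) (x : ℝ) : 0 < x ^ 2 + κ ^ 2 := by positivity

private lemma cont_inv (ω : ℝ) {κ : ℝ} (hκ : 0 < κ) :
    Continuous fun ν : ℝ => ((ω - ν) ^ 2 + κ ^ 2)⁻¹ := by
  apply Continuous.inv₀ (by continuity)
  exact fun ν => (denom_pos hκ _).ne'

private lemma arctan_antideriv (ω : ℝ) {κ : ℝ} (hκ : 0 < κ) (ν : ℝ) :
    HasDerivAt (fun t => κ⁻¹ * Real.arctan ((t - ω) / κ))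
      (((ω - ν) ^ 2 + κ ^ 2)⁻¹) ν := by
  have h1 : HasDerivAt (fun t : ℝ => (t - ω) / κ) (1 / κ) ν := by
    simpa using ((hasDerivAt_id ν).sub_const ω).div_const κ
  have h2 := (Real.hasDerivAt_arctan ((ν - ω) / κ)).comp ν h1
  have h3 := h2.const_mul κ⁻¹
  refine h3.congr_deriv ?_
  have hκ' : κ ≠ 0 := hκ.ne'
  have hd : (ω - ν) ^ 2 + κ ^ 2 ≠ 0 := (denom_pos hκ _).ne'
  have hd2 : (1 : ℝ) + ((ν - ω) / κ) ^ 2 ≠ 0 := by positivity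
  field_simp
  ring

private lemma stmt3_integral_inv (ω : ℝ) {κ : ℝ} (hκ : 0 < κ) (a b : ℝ) :
    ∫ ν in a..b, ((ω - ν) ^ 2 + κ ^ 2)⁻¹ =
      κ⁻¹ * (Real.arctan ((b - ω) / κ) - Real.arctan ((a - ω) / κ)) := by
  rw [intervalIntegral.integral_eq_sub_of_hasDerivAt
    (fun ν _ => arctan_antideriv ω hκ ν) ((cont_inv ω hκ).intervalIntegrable a b)]
  ring

private lemma log_antideriv (ω : ℝ) {κ : ℝ} (hκ : 0 < κ) (ν : ℝ) :
    HasDerivAt (fun t => (1 / 2) * Real.log ((t - ω) ^ 2 + κ ^ 2))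
      ((ν - ω) * ((ω - ν) ^ 2 + κ ^ 2)⁻¹) ν := by
  have h1 : HasDerivAt (fun t : ℝ => (t - ω) ^ 2 + κ ^ 2) (2 * (ν - ω)) ν := by
    simpa using (((hasDerivAt_id ν).sub_const ω).pow 2).add_const (κ ^ 2)
  have hd : (ν - ω) ^ 2 + κ ^ 2 ≠ 0 := (denom_pos hκ _).ne'
  have h2 := (Real.hasDerivAt_log hd).comp ν h1
  have h3 := h2.const_mul (1 / 2 : ℝ)
  refine h3.congr_deriv ?_
  have : (ω - ν) ^ 2 = (ν - ω) ^ 2 := by ring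
  rw [this]
  field_simp

private lemma stmt3_integral_lin (ω : ℝ) {κ : ℝ} (hκ : 0 < κ) (a b : ℝ) :
    ∫ ν in a..b, (ν - ω) * ((ω - ν) ^ 2 + κ ^ 2)⁻¹ =
      (1 / 2) * Real.log ((b - ω) ^ 2 + κ ^ 2) -
        (1 / 2) * Real.log ((a - ω) ^ 2 + κ ^ 2) := by
  have hcont : Continuous fun ν : ℝ => (ν - ω) * ((ω - ν) ^ 2 + κ ^ 2)⁻¹ :=
    (by continuity : Continuous fun ν : ℝ => ν - ω).mul (cont_inv ω hκ)
  exact intervalIntegral.integral_eq_sub_of_hasDerivAt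
    (fun ν _ => log_antideriv ω hκ ν) (hcont.intervalIntegrable a b)


set_option maxHeartbeats 1600000 in
/-- Pointwise error bound for the Lorentzian mollification `Γ₁` of a bounded nonnegative
function `Γ` on `[−ω_c, ω_c]`: for `ω` in the window,
`|Γ₁(ω) − Γ(ω)| ≤ Γ(ω)(1 − arctan(|ω−ω_c|/κ)/π − arctan(|ω+ω_c|/κ)/π)
  + (κ Γ'_max/(2π))(log(((ω−ω_c)²+κ²)/κ²) + log(((ω+ω_c)²+κ²)/κ²))`,
where `Γ'_max` is any bound on `|Γ'|` over the window. -/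
theorem stmt_3 (Γ Γ' : ℝ → ℝ) (Γmax Γdmax ωc κ : ℝ)
    (hωc : 0 < ωc) (hκ : 0 < κ)
    (hnn : ∀ ω, 0 ≤ Γ ω) (hbdd : ∀ ω, Γ ω ≤ Γmax)
    (hderiv : ∀ ω ∈ Set.Icc (-ωc) ωc, HasDerivAt Γ (Γ' ω) ω)
    (hΓd : ∀ ω ∈ Set.Icc (-ωc) ωc, |Γ' ω| ≤ Γdmax)
    (Γ₁ : ℝ → ℝ)
    (hΓ₁ : ∀ ω, Γ₁ ω = (κ / Real.pi) *
        ∫ ν in Set.Icc (-ωc) ωc, Γ ν / ((ω - ν) ^ 2 + κ ^ 2)) :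
    ∀ ω ∈ Set.Icc (-ωc) ωc,
      |Γ₁ ω - Γ ω| ≤
        Γ ω * (1 - (1 / Real.pi) * Real.arctan (|ω - ωc| / κ)
                 - (1 / Real.pi) * Real.arctan (|ω + ωc| / κ))
        + (κ * Γdmax / (2 * Real.pi)) *
            (Real.log (((ω - ωc) ^ 2 + κ ^ 2) / κ ^ 2)
              + Real.log (((ω + ωc) ^ 2 + κ ^ 2) / κ ^ 2)) := by
  intro ω hω
  obtain ⟨hω1, hω2⟩ := hω
  have hπ : (0 : ℝ) < Real.pi := Real.pi_pos
  have hκ' : κ ≠ 0 := hκ.ne'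
  have hle : -ωc ≤ ωc := by linarith
  have hΓd0 : 0 ≤ Γdmax := (abs_nonneg _).trans (hΓd ω ⟨hω1, hω2⟩)
  have hIcc : Set.uIcc (-ωc) ωc = Set.Icc (-ωc) ωc := Set.uIcc_of_le hle
  -- set integral = interval integral
  have hset : (∫ ν in Set.Icc (-ωc) ωc, Γ ν / ((ω - ν) ^ 2 + κ ^ 2)) =
      ∫ ν in (-ωc)..ωc, Γ ν * ((ω - ν) ^ 2 + κ ^ 2)⁻¹ := by
    rw [intervalIntegral.integral_of_le hle, MeasureTheory.integral_Icc_eq_integral_Ioc]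
    simp_rw [div_eq_mul_inv]
  -- continuity / integrability
  have hΓcont : ContinuousOn Γ (Set.Icc (-ωc) ωc) := fun x hx =>
    (hderiv x hx).continuousAt.continuousWithinAt
  have hinvC : Continuous fun ν : ℝ => ((ω - ν) ^ 2 + κ ^ 2)⁻¹ := cont_inv ω hκ
  have hIf : IntervalIntegrable (fun ν => Γ ν * ((ω - ν) ^ 2 + κ ^ 2)⁻¹) volume (-ωc) ωc := by
    apply ContinuousOn.intervalIntegrable
    rw [hIcc]
    exact hΓcont.mul hinvC.continuousOn
  have hIinv : IntervalIntegrable (fun ν => ((ω - ν) ^ 2 + κ ^ 2)⁻¹) volume (-ωc) ωc :=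
    hinvC.intervalIntegrable _ _
  have hIh : IntervalIntegrable (fun ν => (Γ ν - Γ ω) * ((ω - ν) ^ 2 + κ ^ 2)⁻¹)
      volume (-ωc) ωc := by
    apply ContinuousOn.intervalIntegrable
    rw [hIcc]
    exact (hΓcont.sub continuousOn_const).mul hinvC.continuousOn
  have hIabs : IntervalIntegrable (fun ν => |Γ ν - Γ ω| * ((ω - ν) ^ 2 + κ ^ 2)⁻¹)
      volume (-ωc) ωc := by
    apply ContinuousOn.intervalIntegrable
    rw [hIcc]
    exact (hΓcont.sub continuousOn_const).abs.mul hinvC.continuousOn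
  have hIlip : IntervalIntegrable (fun ν => Γdmax * |ν - ω| * ((ω - ν) ^ 2 + κ ^ 2)⁻¹)
      volume (-ωc) ωc := by
    apply Continuous.intervalIntegrable
    exact (continuous_const.mul (by continuity : Continuous fun ν : ℝ => |ν - ω|)).mul hinvC
  -- value of A
  set A : ℝ := Real.arctan ((ωc - ω) / κ) + Real.arctan ((ωc + ω) / κ) with hA
  have hAval : ∫ ν in (-ωc)..ωc, ((ω - ν) ^ 2 + κ ^ 2)⁻¹ = κ⁻¹ * A := by
    rw [stmt3_integral_inv ω hκ, hA]
    have : (-ωc - ω) / κ = -((ωc + ω) / κ) := by ring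
    rw [this, Real.arctan_neg]
    ring
  have hA1 : (κ / Real.pi) * (κ⁻¹ * A) ≤ 1 := by
    have h1 : Real.arctan ((ωc - ω) / κ) ≤ Real.pi / 2 := (Real.arctan_lt_pi_div_two _).le
    have h2 : Real.arctan ((ωc + ω) / κ) ≤ Real.pi / 2 := (Real.arctan_lt_pi_div_two _).le
    have : (κ / Real.pi) * (κ⁻¹ * A) = A / Real.pi := by field_simp
    rw [this, div_le_one hπ]
    rw [hA]; linarith
  -- decomposition
  have hdecomp : Γ₁ ω - Γ ω =
      (κ / Real.pi) * (∫ ν in (-ωc)..ωc, (Γ ν - Γ ω) * ((ω - ν) ^ 2 + κ ^ 2)⁻¹)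
        - Γ ω * (1 - (κ / Real.pi) * (κ⁻¹ * A)) := by
    rw [hΓ₁, hset]
    have : (∫ ν in (-ωc)..ωc, (Γ ν - Γ ω) * ((ω - ν) ^ 2 + κ ^ 2)⁻¹) =
        (∫ ν in (-ωc)..ωc, Γ ν * ((ω - ν) ^ 2 + κ ^ 2)⁻¹)
          - Γ ω * ∫ ν in (-ωc)..ωc, ((ω - ν) ^ 2 + κ ^ 2)⁻¹ := by
      rw [← intervalIntegral.integral_const_mul, ← intervalIntegral.integral_sub hIf
        (hIinv.const_mul (Γ ω))]
      congr 1; ext ν; ring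
    rw [← hAval, this]
    ring
  -- Lipschitz bound
  have hlip : ∀ ν ∈ Set.Icc (-ωc) ωc, |Γ ν - Γ ω| ≤ Γdmax * |ν - ω| := by
    intro ν hν
    have := (convex_Icc (-ωc) ωc).norm_image_sub_le_of_norm_hasDerivWithin_le
      (fun x hx => (hderiv x hx).hasDerivWithinAt)
      (fun x hx => by simpa [Real.norm_eq_abs] using hΓd x hx)
      ⟨hω1, hω2⟩ hν
    simpa [Real.norm_eq_abs] using this
  -- bound on the error integral
  have habs : |∫ ν in (-ωc)..ωc, (Γ ν - Γ ω) * ((ω - ν) ^ 2 + κ ^ 2)⁻¹| ≤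
      ∫ ν in (-ωc)..ωc, Γdmax * |ν - ω| * ((ω - ν) ^ 2 + κ ^ 2)⁻¹ := by
    have habs_d : ∀ ν : ℝ, |((ω - ν) ^ 2 + κ ^ 2)⁻¹| = ((ω - ν) ^ 2 + κ ^ 2)⁻¹ :=
      fun ν => abs_of_pos (inv_pos.mpr (denom_pos hκ (ω - ν)))
    have h1 : |∫ ν in (-ωc)..ωc, (Γ ν - Γ ω) * ((ω - ν) ^ 2 + κ ^ 2)⁻¹| ≤
        ∫ ν in (-ωc)..ωc, |Γ ν - Γ ω| * ((ω - ν) ^ 2 + κ ^ 2)⁻¹ := by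
      have h2 := intervalIntegral.norm_integral_le_integral_norm
        (f := fun ν => (Γ ν - Γ ω) * ((ω - ν) ^ 2 + κ ^ 2)⁻¹) (μ := volume) hle
      simp only [Real.norm_eq_abs, abs_mul, habs_d] at h2
      exact h2
    refine h1.trans (intervalIntegral.integral_mono_on hle hIabs hIlip ?_)
    intro ν hν
    exact mul_le_mul_of_nonneg_right (hlip ν hν)
      (inv_pos.mpr (denom_pos hκ (ω - ν))).le
  -- value of B
  have hBint : ∫ ν in (-ωc)..ωc, |ν - ω| * ((ω - ν) ^ 2 + κ ^ 2)⁻¹ =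
      (1 / 2) * Real.log ((ωc + ω) ^ 2 + κ ^ 2)
        + (1 / 2) * Real.log ((ωc - ω) ^ 2 + κ ^ 2) - Real.log (κ ^ 2) := by
    have hcontb : Continuous fun ν : ℝ => |ν - ω| * ((ω - ν) ^ 2 + κ ^ 2)⁻¹ :=
      (by continuity : Continuous fun ν : ℝ => |ν - ω|).mul hinvC
    rw [← intervalIntegral.integral_add_adjacent_intervals
      (hcontb.intervalIntegrable (-ωc) ω) (hcontb.intervalIntegrable ω ωc)]
    have e1 : (∫ ν in (-ωc)..ω, |ν - ω| * ((ω - ν) ^ 2 + κ ^ 2)⁻¹) =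
        ∫ ν in (-ωc)..ω, -((ν - ω) * ((ω - ν) ^ 2 + κ ^ 2)⁻¹) := by
      apply intervalIntegral.integral_congr
      intro ν hν
      rw [Set.uIcc_of_le hω1] at hν
      have : |ν - ω| = -(ν - ω) := abs_of_nonpos (by linarith [hν.2])
      simp only [this]; ring
    have e2 : (∫ ν in ω..ωc, |ν - ω| * ((ω - ν) ^ 2 + κ ^ 2)⁻¹) =
        ∫ ν in ω..ωc, (ν - ω) * ((ω - ν) ^ 2 + κ ^ 2)⁻¹ := by
      apply intervalIntegral.integral_congr
      intro ν hν
      rw [Set.uIcc_of_le hω2] at hν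
      have : |ν - ω| = ν - ω := abs_of_nonneg (by linarith [hν.1])
      simp only [this]
    rw [e1, e2, intervalIntegral.integral_neg, stmt3_integral_lin ω hκ,
      stmt3_integral_lin ω hκ]
    have r1 : (ω - ω) ^ 2 = 0 := by ring
    have r2 : (-ωc - ω) ^ 2 = (ωc + ω) ^ 2 := by ring
    rw [r1, r2, zero_add]
    ring
  have hlipint : (∫ ν in (-ωc)..ωc, Γdmax * |ν - ω| * ((ω - ν) ^ 2 + κ ^ 2)⁻¹) =
      Γdmax * ∫ ν in (-ωc)..ωc, |ν - ω| * ((ω - ν) ^ 2 + κ ^ 2)⁻¹ := by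
    simp_rw [mul_assoc]
    exact intervalIntegral.integral_const_mul _ _
  -- assembling
  have hY0 : 0 ≤ Γ ω * (1 - (κ / Real.pi) * (κ⁻¹ * A)) :=
    mul_nonneg (hnn ω) (by linarith)
  rw [hdecomp]
  have step1 : |(κ / Real.pi) * (∫ ν in (-ωc)..ωc, (Γ ν - Γ ω) * ((ω - ν) ^ 2 + κ ^ 2)⁻¹)
        - Γ ω * (1 - (κ / Real.pi) * (κ⁻¹ * A))|
      ≤ (κ / Real.pi) * (Γdmax * ((1 / 2) * Real.log ((ωc + ω) ^ 2 + κ ^ 2)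
          + (1 / 2) * Real.log ((ωc - ω) ^ 2 + κ ^ 2) - Real.log (κ ^ 2)))
        + Γ ω * (1 - (κ / Real.pi) * (κ⁻¹ * A)) := by
    refine (abs_sub _ _).trans ?_
    rw [abs_of_nonneg hY0, abs_mul, abs_of_pos (div_pos hκ hπ)]
    have : |∫ ν in (-ωc)..ωc, (Γ ν - Γ ω) * ((ω - ν) ^ 2 + κ ^ 2)⁻¹| ≤
        Γdmax * ((1 / 2) * Real.log ((ωc + ω) ^ 2 + κ ^ 2)
          + (1 / 2) * Real.log ((ωc - ω) ^ 2 + κ ^ 2) - Real.log (κ ^ 2)) := by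
      rw [← hBint, ← hlipint]; exact habs
    have := mul_le_mul_of_nonneg_left this (div_pos hκ hπ).le
    linarith
  refine step1.trans (le_of_eq ?_)
  -- rewrite absolute values and logs
  have harg1 : |ω - ωc| = ωc - ω := by
    rw [abs_of_nonpos (show ω - ωc ≤ 0 by linarith)]; ring
  have harg2 : |ω + ωc| = ωc + ω := by
    rw [abs_of_nonneg (show (0:ℝ) ≤ ω + ωc by linarith)]; ring
  have hlog1 : Real.log (((ω - ωc) ^ 2 + κ ^ 2) / κ ^ 2) =
      Real.log ((ωc - ω) ^ 2 + κ ^ 2) - Real.log (κ ^ 2) := by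
    rw [Real.log_div (denom_pos hκ _).ne' (by positivity)]
    congr 2; ring
  have hlog2 : Real.log (((ω + ωc) ^ 2 + κ ^ 2) / κ ^ 2) =
      Real.log ((ωc + ω) ^ 2 + κ ^ 2) - Real.log (κ ^ 2) := by
    rw [Real.log_div (denom_pos hκ _).ne' (by positivity)]
    congr 2; ring
  rw [harg1, harg2, hlog1, hlog2, hA]
  have hAe : (κ / Real.pi) * (κ⁻¹ * (Real.arctan ((ωc - ω) / κ) + Real.arctan ((ωc + ω) / κ)))
      = (1 / Real.pi) * Real.arctan ((ωc - ω) / κ) + (1 / Real.pi) * Real.arctan ((ωc + ω) / κ) := by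
    field_simp
  rw [hAe]
  ring
end

section
/- Let Γ : ℝ → [0,∞) be bounded with Γ_max = sup Γ, let ω_c, κ > 0, M ≥ 2, δ = 2ω_c/(M−1), ω_n = −ω_c + (n−1)δ for n = 1,…,M, and let Γ̂(ω) = Σ_{n=1}^M (κδ/π)·Γ(ω_n)/((ω−ω_n)² + κ²). Then ∫_{|ω| ≥ ω_c} |Γ̂(ω)| dω ≤ δ·Γ_max + (2δ·Γ_max/π)·Σ_{n=1}^{M−1} arctan(κ/(nδ)). -/
open MeasureTheory Real Set Filter Topology

lemma lor_eq {κ : ℝ} (hκ : 0 < κ) (a x : ℝ) :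
    κ⁻¹ * (1 + ((x - a) / κ) ^ 2)⁻¹ = κ / ((x - a) ^ 2 + κ ^ 2) := by
  have h1 : (0:ℝ) < (x - a) ^ 2 + κ ^ 2 := by positivity
  have h2 : (0:ℝ) < 1 + ((x - a) / κ) ^ 2 := by positivity
  field_simp
  ring

lemma lor_integrable {κ : ℝ} (hκ : 0 < κ) (a : ℝ) :
    Integrable (fun x : ℝ => κ / ((x - a) ^ 2 + κ ^ 2)) := by
  have h1 : Integrable (fun y : ℝ => (1 + y ^ 2)⁻¹) := integrable_inv_one_add_sq
  have h2 := ((h1.comp_div hκ.ne').comp_sub_right a).const_mul κ⁻¹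
  exact h2.congr (Filter.Eventually.of_forall fun x => lor_eq hκ a x)

lemma lor_hasDerivAt {κ : ℝ} (hκ : 0 < κ) (a x : ℝ) :
    HasDerivAt (fun x => arctan ((x - a) / κ)) (κ / ((x - a) ^ 2 + κ ^ 2)) x := by
  have h := (Real.hasDerivAt_arctan ((x - a) / κ)).comp x
    (((hasDerivAt_id x).sub_const a).div_const κ)
  refine HasDerivAt.congr_deriv (f' := 1 / (1 + ((x - a) / κ) ^ 2) * (1 / κ)) h ?_
  rw [← lor_eq hκ a x]
  simp [one_div]
  ring

lemma lor_tendsto_top {κ : ℝ} (hκ : 0 < κ) (a : ℝ) :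
    Tendsto (fun x => arctan ((x - a) / κ)) atTop (𝓝 (π / 2)) := by
  apply tendsto_nhds_of_tendsto_nhdsWithin
  refine tendsto_arctan_atTop.comp ?_
  exact (tendsto_atTop_add_const_right atTop (-a) tendsto_id).atTop_div_const hκ |>.congr
    (fun x => by simp [id]; ring)

lemma lor_tendsto_bot {κ : ℝ} (hκ : 0 < κ) (a : ℝ) :
    Tendsto (fun x => arctan ((x - a) / κ)) atBot (𝓝 (-(π / 2))) := by
  apply tendsto_nhds_of_tendsto_nhdsWithin
  refine tendsto_arctan_atBot.comp ?_
  exact (tendsto_atBot_add_const_right atBot (-a) tendsto_id).atBot_div_const hκ |>.congr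
    (fun x => by simp [id]; ring)

lemma lor_Ioi {κ : ℝ} (hκ : 0 < κ) (a c : ℝ) :
    ∫ x in Ioi c, κ / ((x - a) ^ 2 + κ ^ 2) = π / 2 - arctan ((c - a) / κ) :=
  integral_Ioi_of_hasDerivAt_of_tendsto' (fun x _ => lor_hasDerivAt hκ a x)
    ((lor_integrable hκ a).integrableOn) (lor_tendsto_top hκ a)

lemma lor_Iic {κ : ℝ} (hκ : 0 < κ) (a c : ℝ) :
    ∫ x in Iic c, κ / ((x - a) ^ 2 + κ ^ 2) = arctan ((c - a) / κ) + π / 2 := by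
  rw [integral_Iic_of_hasDerivAt_of_tendsto' (fun x _ => lor_hasDerivAt hκ a x)
    ((lor_integrable hκ a).integrableOn) (lor_tendsto_bot hκ a)]
  ring

lemma sum_Icc_one (M : ℕ) (f : ℕ → ℝ) :
    ∑ n ∈ Finset.Icc 1 M, f n = ∑ i ∈ Finset.range M, f (i + 1) := by
  rw [← Finset.Ico_add_one_right_eq_Icc, Finset.sum_Ico_eq_sum_range]
  simp [add_comm]

/-- Tail bound for the sum-of-Lorentzians approximation `Γ̂` built from `M` equally spaced
Lorentzians of width `κ` sampling a bounded nonnegative function `Γ`: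
`∫_{|ω| ≥ ω_c} |Γ̂(ω)| dω ≤ δ Γ_max + (2δΓ_max/π) ∑_{n=1}^{M−1} arctan(κ/(nδ))`. -/
theorem stmt_5 (Γ : ℝ → ℝ) (Γmax ωc κ : ℝ) (M : ℕ)
    (hωc : 0 < ωc) (hκ : 0 < κ) (hM : 2 ≤ M)
    (hnn : ∀ ω, 0 ≤ Γ ω) (hbdd : ∀ ω, Γ ω ≤ Γmax)
    (δ : ℝ) (hδ : δ = 2 * ωc / ((M : ℝ) - 1))
    (ωn : ℕ → ℝ) (hωn : ∀ n, ωn n = -ωc + ((n : ℝ) - 1) * δ)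
    (Γhat : ℝ → ℝ)
    (hΓhat : ∀ ω, Γhat ω = ∑ n ∈ Finset.Icc 1 M,
        (κ * δ / Real.pi) * (Γ (ωn n) / ((ω - ωn n) ^ 2 + κ ^ 2))) :
    ∫ ω in {ω : ℝ | ωc ≤ |ω|}, |Γhat ω|
      ≤ δ * Γmax + (2 * δ * Γmax / Real.pi) *
          ∑ n ∈ Finset.Icc 1 (M - 1), Real.arctan (κ / ((n : ℝ) * δ)) := by
  have hM1 : (1:ℝ) ≤ (M:ℝ) - 1 := by
    have : (2:ℝ) ≤ (M:ℝ) := by exact_mod_cast hM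
    linarith
  have hδpos : 0 < δ := by rw [hδ]; exact div_pos (by linarith) (by linarith)
  have h2ωc : 2 * ωc = ((M:ℝ) - 1) * δ := by
    rw [hδ]; field_simp
  have hΓmax0 : 0 ≤ Γmax := le_trans (hnn 0) (hbdd 0)
  have hπ : (0:ℝ) < π := Real.pi_pos
  set A : ℕ → ℝ := fun n => arctan (((n:ℝ) - 1) * δ / κ) with hA
  set B : ℕ → ℝ := fun n => arctan (((M:ℝ) - (n:ℝ)) * δ / κ) with hB
  have hS : {ω : ℝ | ωc ≤ |ω|} = Iic (-ωc) ∪ Ici ωc := by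
    ext ω
    simp only [mem_setOf_eq, mem_union, mem_Iic, mem_Ici, le_abs, le_neg]
    tauto
  have habs : ∀ ω, |Γhat ω| = Γhat ω := by
    intro ω
    rw [abs_of_nonneg]
    rw [hΓhat]
    apply Finset.sum_nonneg
    intro n _
    have h1 : (0:ℝ) < (ω - ωn n) ^ 2 + κ ^ 2 := by positivity
    have h2 := hnn (ωn n)
    positivity
  have hform : ∀ ω, Γhat ω = ∑ n ∈ Finset.Icc 1 M,
      (δ * Γ (ωn n) / π) * (κ / ((ω - ωn n) ^ 2 + κ ^ 2)) := by
    intro ω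
    rw [hΓhat]
    refine Finset.sum_congr rfl fun n _ => ?_
    have h1 : (0:ℝ) < (ω - ωn n) ^ 2 + κ ^ 2 := by positivity
    field_simp
  have hdisj : Disjoint (Iic (-ωc)) (Ici ωc) := by
    rw [Set.disjoint_left]
    intro x hx hx'
    simp only [mem_Iic, mem_Ici] at hx hx'
    linarith
  -- per-n tail integral
  have htail : ∀ n ∈ Finset.Icc 1 M,
      ∫ ω in Iic (-ωc) ∪ Ici ωc, (δ * Γ (ωn n) / π) * (κ / ((ω - ωn n) ^ 2 + κ ^ 2))
        = (δ * Γ (ωn n) / π) * (π - A n - B n) := by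
    intro n hn
    simp only [Finset.mem_Icc] at hn
    rw [integral_const_mul]
    congr 1
    rw [setIntegral_union hdisj measurableSet_Ici
      ((lor_integrable hκ (ωn n)).integrableOn)
      ((lor_integrable hκ (ωn n)).integrableOn),
      integral_Ici_eq_integral_Ioi, lor_Iic hκ, lor_Ioi hκ]
    have e1 : -ωc - ωn n = -((((n:ℝ) - 1) * δ)) := by rw [hωn]; ring
    have e2 : ωc - ωn n = ((M:ℝ) - (n:ℝ)) * δ := by rw [hωn]; nlinarith [h2ωc]
    rw [e1, e2, neg_div, arctan_neg]
    simp only [hA, hB]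
    ring
  have key : ∫ ω in {ω : ℝ | ωc ≤ |ω|}, |Γhat ω|
      = ∑ n ∈ Finset.Icc 1 M, (δ * Γ (ωn n) / π) * (π - A n - B n) := by
    rw [hS]
    simp only [habs]
    simp only [hform]
    rw [MeasureTheory.integral_finset_sum _ (fun n _ =>
      (((lor_integrable hκ (ωn n)).const_mul _).integrableOn))]
    exact Finset.sum_congr rfl htail
  rw [key]
  -- bound each term
  have hbound : ∑ n ∈ Finset.Icc 1 M, (δ * Γ (ωn n) / π) * (π - A n - B n)
      ≤ (δ * Γmax / π) * ∑ n ∈ Finset.Icc 1 M, (π - A n - B n) := by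
    rw [Finset.mul_sum]
    refine Finset.sum_le_sum fun n _ => ?_
    have h1 : 0 ≤ π - A n - B n := by
      have := arctan_lt_pi_div_two (((n:ℝ) - 1) * δ / κ)
      have := arctan_lt_pi_div_two (((M:ℝ) - (n:ℝ)) * δ / κ)
      simp only [hA, hB]
      linarith
    have h2 : δ * Γ (ωn n) / π ≤ δ * Γmax / π := by
      gcongr
      exact hbdd _
    exact mul_le_mul_of_nonneg_right h2 h1 |>.trans_eq rfl
  refine hbound.trans ?_
  -- evaluate the sums
  set T : ℝ := ∑ i ∈ Finset.range (M - 1), arctan (((i:ℝ) + 1) * δ / κ) with hT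
  have hMpred : M - 1 + 1 = M := by omega
  have hsumA : ∑ n ∈ Finset.Icc 1 M, A n = T := by
    rw [sum_Icc_one]
    have : ∑ i ∈ Finset.range M, A (i + 1)
        = ∑ i ∈ Finset.range (M - 1 + 1), A (i + 1) := by rw [hMpred]
    rw [this, Finset.sum_range_succ']
    simp only [hA]
    push_cast
    rw [hT]
    norm_num
  have hsumB : ∑ n ∈ Finset.Icc 1 M, B n = T := by
    have : ∑ n ∈ Finset.Icc 1 M, B n = ∑ n ∈ Finset.Icc 1 M, A n := by
      refine Finset.sum_nbij' (fun n => M + 1 - n) (fun n => M + 1 - n) ?_ ?_ ?_ ?_ ?_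
      · intro a ha; simp only [Finset.mem_Icc] at *; omega
      · intro a ha; simp only [Finset.mem_Icc] at *; omega
      · intro a ha; simp only [Finset.mem_Icc] at ha; omega
      · intro a ha; simp only [Finset.mem_Icc] at ha; omega
      · intro a ha
        simp only [Finset.mem_Icc] at ha
        simp only [hA, hB]
        congr 2
        have : ((M + 1 - a : ℕ) : ℝ) = (M:ℝ) + 1 - (a:ℝ) := by
          have : a ≤ M + 1 := by omega
          push_cast [Nat.cast_sub this]
          ring
        rw [this]
        ring
    rw [this, hsumA]
  have hcard : (Finset.Icc 1 M).card = M := by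
    rw [Nat.card_Icc]
    omega
  have hsumTotal : ∑ n ∈ Finset.Icc 1 M, (π - A n - B n) = (M:ℝ) * π - 2 * T := by
    simp only [sub_sub]
    rw [Finset.sum_sub_distrib, Finset.sum_add_distrib, hsumA, hsumB, Finset.sum_const, hcard,
      nsmul_eq_mul]
    ring
  rw [hsumTotal]
  -- rewrite the RHS sum
  have hRHS : ∑ n ∈ Finset.Icc 1 (M - 1), Real.arctan (κ / ((n : ℝ) * δ))
      = ((M:ℝ) - 1) * (π / 2) - T := by
    have step : ∀ n ∈ Finset.Icc 1 (M - 1), Real.arctan (κ / ((n : ℝ) * δ))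
        = π / 2 - arctan ((n:ℝ) * δ / κ) := by
      intro n hn
      simp only [Finset.mem_Icc] at hn
      have hn1 : (1:ℝ) ≤ (n:ℝ) := by exact_mod_cast hn.1
      have hpos : 0 < (n:ℝ) * δ / κ := by positivity
      rw [show κ / ((n : ℝ) * δ) = ((n:ℝ) * δ / κ)⁻¹ by rw [inv_div], arctan_inv_of_pos hpos]
    rw [Finset.sum_congr rfl step, Finset.sum_sub_distrib, Finset.sum_const, Nat.card_Icc, nsmul_eq_mul]
    have hMc : ((M - 1 + 1 - 1 : ℕ) : ℝ) = (M:ℝ) - 1 := by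
      have : (M - 1 + 1 - 1 : ℕ) = M - 1 := by omega
      rw [this]
      push_cast [Nat.cast_sub (by omega : 1 ≤ M)]
      ring
    rw [hMc]
    congr 1
    rw [sum_Icc_one, hT]
    refine Finset.sum_congr rfl fun i _ => ?_
    push_cast
    ring
  rw [hRHS]
  have : (δ * Γmax / π) * ((M:ℝ) * π - 2 * T)
      = δ * Γmax + (2 * δ * Γmax / π) * (((M:ℝ) - 1) * (π / 2) - T) := by
    field_simp
    ring
  linarith [this]
end

section
/- Let ψ₀ be a vector in a Hilbert space with P·ψ₀ = ψ₀ for an orthogonal projection P, let Q = I − P, let H(t) be a family of bounded self-adjoint operators with propagator U(t,0), let H_P(t) = P·H(t)·P with propagator U_P(t,0), and set ψ(t) = U(t,0)ψ₀, ψ_P(t) = U_P(t,0)ψ₀. Then ‖ψ(t) − ψ_P(t)‖ ≤ ‖Q·ψ(t)‖ + ∫₀^t ‖P·H(s)·Q·ψ(s)‖ ds. -/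
/-- Lemma 1 of the paper (frequency-cutoff decomposition): if `P` is an orthogonal
projection with `P ψ₀ = ψ₀`, `Q = 1 − P`, `Ham(t)` a continuous family of bounded
self-adjoint operators with propagator `U`, and `U_P` the propagator of
`H_P(t) = P Ham(t) P`, then with `ψ(t) = U(t,0)ψ₀` and `ψ_P(t) = U_P(t,0)ψ₀`,
`‖ψ(t) − ψ_P(t)‖ ≤ ‖Q ψ(t)‖ + ∫₀^t ‖P Ham(s) Q ψ(s)‖ ds`. -/
theorem stmt_12
    {H : Type*} [NormedAddCommGroup H] [InnerProductSpace ℂ H] [CompleteSpace H]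
    (P : H →L[ℂ] H) (hPproj : P.comp P = P)
    (hPsa : ∀ x y, (inner ℂ (P x) y : ℂ) = inner ℂ x (P y))
    (Ham : ℝ → H →L[ℂ] H) (hc : Continuous Ham)
    (hsa : ∀ t x y, (inner ℂ (Ham t x) y : ℂ) = inner ℂ x (Ham t y))
    (HamP : ℝ → H →L[ℂ] H) (hHamP : ∀ t, HamP t = P.comp ((Ham t).comp P))
    (U UP : ℝ → ℝ → H →L[ℂ] H)
    (hUiso : ∀ t s x, ‖U t s x‖ = ‖x‖) (hUPiso : ∀ t s x, ‖UP t s x‖ = ‖x‖)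
    (hUid : ∀ s, U s s = 1) (hUPid : ∀ s, UP s s = 1)
    (hUcomp : ∀ t s r, (U t s).comp (U s r) = U t r)
    (hUPcomp : ∀ t s r, (UP t s).comp (UP s r) = UP t r)
    (hUderiv : ∀ s x t,
      HasDerivAt (fun τ => U τ s x) (-(Complex.I • (Ham t (U t s x)))) t)
    (hUPderiv : ∀ s x t,
      HasDerivAt (fun τ => UP τ s x) (-(Complex.I • (HamP t (UP t s x)))) t)
    (ψ₀ : H) (hψ₀ : P ψ₀ = ψ₀) (t : ℝ) (ht : 0 ≤ t) :
    ‖U t 0 ψ₀ - UP t 0 ψ₀‖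
      ≤ ‖(1 - P) (U t 0 ψ₀)‖ + ∫ s in (0:ℝ)..t, ‖P (Ham s ((1 - P) (U s 0 ψ₀)))‖ := by
  set ψ : ℝ → H := fun s => U s 0 ψ₀ with hψdef
  set F : ℝ → H := fun s => P (Ham s ((1 - P) (ψ s))) with hFdef
  set e : ℝ → H := fun s => UP s 0 ψ₀ - P (ψ s) with hedef
  -- idempotence pointwise
  have hPP : ∀ x : H, P (P x) = P x := fun x => by rw [← ContinuousLinearMap.comp_apply, hPproj]
  -- self-adjointness of HamP
  have hHamPsa : ∀ s (x y : H), (inner ℂ (HamP s x) y : ℂ) = inner ℂ x (HamP s y) := by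
    intro s x y
    simp only [hHamP, ContinuousLinearMap.comp_apply]
    rw [hPsa, hsa, hPsa]
  -- continuity of ψ
  have hψcont : Continuous ψ := by
    rw [continuous_iff_continuousAt]
    exact fun s => (hUderiv 0 ψ₀ s).continuousAt
  have hFcont : Continuous F := by
    apply Continuous.clm_apply continuous_const
    apply Continuous.clm_apply hc
    exact Continuous.clm_apply continuous_const hψcont
  -- derivative of e
  have he' : ∀ s, HasDerivAt e (-(Complex.I • HamP s (e s)) + Complex.I • F s) s := by
    intro s
    have h1 := hUPderiv 0 ψ₀ s
    have h2 : HasDerivAt (fun τ => P (ψ τ)) (P (-(Complex.I • Ham s (ψ s)))) s := by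
      have := ((P.restrictScalars ℝ).hasFDerivAt (x := ψ s)).comp_hasDerivAt s (hUderiv 0 ψ₀ s)
      simpa [Function.comp_def, ContinuousLinearMap.coe_restrictScalars'] using this
    have h3 := h1.sub h2
    convert h3 using 1
    · rfl
    simp only [hedef, hFdef, map_neg, map_smul, hHamP, ContinuousLinearMap.comp_apply,
      ContinuousLinearMap.sub_apply, ContinuousLinearMap.one_apply, map_sub, hPP]
    module
  set C : ℝ := ∫ s in (0:ℝ)..t, ‖F s‖ with hCdef
  have hCnonneg : 0 ≤ C :=
    intervalIntegral.integral_nonneg ht (fun u _ => norm_nonneg _)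
  -- the key estimate: ‖e t‖ ≤ C
  have hkey : ‖e t‖ ≤ C := by
    set a : H := UP 0 t (e t) with hadef
    set g : ℝ → ℂ := fun s => inner ℂ (UP s 0 a) (e s) with hgdef
    have hg' : ∀ s, HasDerivAt g (Complex.I * inner ℂ (UP s 0 a) (F s)) s := by
      intro s
      have hu := hUPderiv 0 a s
      have h := HasDerivAt.inner ℂ hu (he' s)
      convert h using 1
      · rfl
      simp only [inner_add_right, inner_neg_right, inner_smul_right, inner_neg_left,
        inner_smul_left, Complex.conj_I]
      rw [hHamPsa]
      ring
    have hgcont : Continuous fun s => Complex.I * (inner ℂ (UP s 0 a) (F s) : ℂ) := by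
      apply continuous_const.mul
      apply Continuous.inner _ hFcont
      rw [continuous_iff_continuousAt]
      exact fun s => (hUPderiv 0 a s).continuousAt
    have hftc := intervalIntegral.integral_eq_sub_of_hasDerivAt
      (f := g) (f' := fun s => Complex.I * inner ℂ (UP s 0 a) (F s))
      (fun s _ => hg' s) (hgcont.intervalIntegrable 0 t)
    have hg0 : g 0 = 0 := by
      simp only [hgdef, hedef, hψdef]
      rw [hUid, hUPid]
      simp [hψ₀]
    have hgt : g t = (‖e t‖ : ℂ) ^ 2 := by
      have : UP t 0 a = e t := by
        have h := hUPcomp t 0 t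
        rw [hUPid] at h
        have h2 := DFunLike.congr_fun h (e t)
        simpa [hadef] using h2
      rw [hgdef]; simp only []
      rw [this, inner_self_eq_norm_sq_to_K]
      norm_num
    have hnorm : ‖e t‖ ^ 2 ≤ ‖e t‖ * C := by
      have h1 : ‖g t - g 0‖ ≤ ∫ s in (0:ℝ)..t, ‖Complex.I * (inner ℂ (UP s 0 a) (F s) : ℂ)‖ := by
        rw [← hftc]
        exact intervalIntegral.norm_integral_le_integral_norm ht
      have h2 : (∫ s in (0:ℝ)..t, ‖Complex.I * (inner ℂ (UP s 0 a) (F s) : ℂ)‖)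
          ≤ ∫ s in (0:ℝ)..t, ‖e t‖ * ‖F s‖ := by
        apply intervalIntegral.integral_mono_on ht
          ((hgcont.norm).intervalIntegrable 0 t)
          ((continuous_const.mul hFcont.norm).intervalIntegrable 0 t)
        intro s _
        rw [norm_mul, Complex.norm_I, one_mul]
        calc ‖(inner ℂ (UP s 0 a) (F s) : ℂ)‖ ≤ ‖UP s 0 a‖ * ‖F s‖ := norm_inner_le_norm _ _
          _ = ‖e t‖ * ‖F s‖ := by rw [hUPiso, hadef, hUPiso]
      have h3 : (∫ s in (0:ℝ)..t, ‖e t‖ * ‖F s‖) = ‖e t‖ * C := by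
        rw [hCdef, ← intervalIntegral.integral_const_mul]
      have h4 : ‖e t‖ ^ 2 ≤ ‖g t - g 0‖ := by
        rw [hg0, sub_zero, hgt]
        rw [norm_pow]
        simp
      linarith
    rcases eq_or_lt_of_le (norm_nonneg (e t)) with h | h
    · rw [← h]; exact hCnonneg
    · nlinarith
  -- finish
  have hsplit : U t 0 ψ₀ - UP t 0 ψ₀ = (1 - P) (ψ t) + (-(e t)) := by
    simp only [hedef, hψdef, ContinuousLinearMap.sub_apply, ContinuousLinearMap.one_apply]
    abel
  rw [hsplit]
  calc ‖(1 - P) (ψ t) + (-(e t))‖ ≤ ‖(1 - P) (ψ t)‖ + ‖-(e t)‖ := norm_add_le _ _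
    _ = ‖(1 - P) (ψ t)‖ + ‖e t‖ := by rw [norm_neg]
    _ ≤ ‖(1 - P) (ψ t)‖ + C := by linarith
end

section
/- Let G : [0,t] → ℂ be absolutely continuous with |G(s)| ≤ B for all s and esssup_{s∈[0,t]}|G'(s)| ≤ B·γ. Define H(ω) = ∫₀^t G(s)·e^{−iω(t−s)} ds for ω ≠ 0. Then |H(ω)| ≤ B·(2 + γ·t)/|ω|. -/
open MeasureTheory

/-- Integration-by-parts decay estimate: if `G` is absolutely continuous on `[0,t]` with
`‖G‖ ≤ B` and `‖G'‖ ≤ Bγ` a.e., then for `ω ≠ 0`,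
`‖∫₀^t G(s) e^{−iω(t−s)} ds‖ ≤ B(2 + γt)/|ω|`. -/
theorem stmt_18 (t B γ ω : ℝ) (ht : 0 ≤ t) (hB : 0 ≤ B) (hγ : 0 ≤ γ) (hω : ω ≠ 0)
    (G G' : ℝ → ℂ)
    (hInt : IntegrableOn G' (Set.Icc 0 t))
    (hFTC : ∀ s ∈ Set.Icc (0:ℝ) t, G s = G 0 + ∫ τ in (0:ℝ)..s, G' τ)
    (hGb : ∀ s ∈ Set.Icc (0:ℝ) t, ‖G s‖ ≤ B)
    (hG'b : ∀ᵐ s ∂(volume.restrict (Set.Icc (0:ℝ) t)), ‖G' s‖ ≤ B * γ) :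
    ‖∫ s in (0:ℝ)..t, G s * Complex.exp (-(Complex.I * (ω : ℂ) * ((t : ℂ) - (s : ℂ))))‖
      ≤ B * (2 + γ * t) / |ω| := by
  have hωpos : 0 < |ω| := abs_pos.mpr hω
  set c : ℂ := Complex.I * (ω : ℂ) with hc_def
  have hc : c ≠ 0 := by
    simp [hc_def, Complex.I_ne_zero, Complex.ofReal_eq_zero, hω]
  set E : ℝ → ℂ := fun s => Complex.exp (-(Complex.I * (ω : ℂ) * ((t : ℂ) - (s : ℂ)))) with hE_def
  set F : ℝ → ℂ := fun s => E s / c with hF_def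
  -- norm facts
  have hEnorm : ∀ s : ℝ, ‖E s‖ = 1 := by
    intro s
    have harg : -(Complex.I * (ω : ℂ) * ((t : ℂ) - (s : ℂ)))
        = ((ω * (s - t) : ℝ) : ℂ) * Complex.I := by push_cast; ring
    rw [hE_def]
    simp only [harg]
    rw [Complex.norm_exp_ofReal_mul_I]
  have hcnorm : ‖c‖ = |ω| := by
    rw [hc_def, norm_mul, Complex.norm_I, one_mul,
      Complex.norm_real, Real.norm_eq_abs]
  have hFnorm : ∀ s : ℝ, ‖F s‖ = 1 / |ω| := by
    intro s
    rw [hF_def]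
    simp only [norm_div, hEnorm, hcnorm]
  -- E is continuous
  have hEcont : Continuous E := by
    rw [hE_def]; fun_prop
  -- F is an antiderivative of E
  have hFderiv : ∀ s : ℝ, HasDerivAt F (E s) s := by
    intro s
    have harg : ∀ z : ℂ, -(Complex.I * (ω : ℂ) * ((t : ℂ) - z)) = c * z - c * (t : ℂ) := by
      intro z; rw [hc_def]; ring
    have h2 : HasDerivAt (fun s : ℝ => Complex.exp (c * (s : ℂ) - c * (t : ℂ)) / c)
        (Complex.exp (c * (s : ℂ) - c * (t : ℂ)) * c / c) s := by
      have h1 := ((((hasDerivAt_id ((s : ℝ) : ℂ)).const_mul c).sub_const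
        (c * (t : ℂ))).cexp.div_const c).comp_ofReal
      simpa using h1
    have h3 : Complex.exp (c * (s : ℂ) - c * (t : ℂ)) * c / c
        = Complex.exp (c * (s : ℂ) - c * (t : ℂ)) := by
      field_simp
    rw [h3] at h2
    have h4 : F = fun s : ℝ => Complex.exp (c * (s : ℂ) - c * (t : ℂ)) / c := by
      funext x; rw [hF_def, hE_def]; simp only [harg]
    have h5 : E s = Complex.exp (c * (s : ℂ) - c * (t : ℂ)) := by
      rw [hE_def]; simp only [harg]
    rw [h4, h5]
    exact h2
  -- FTC for E
  have hEint : ∀ a b : ℝ, IntervalIntegrable E volume a b := fun a b =>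
    hEcont.intervalIntegrable a b
  have hEftc : ∀ τ : ℝ, (∫ s in τ..t, E s) = F t - F τ := fun τ =>
    intervalIntegral.integral_eq_sub_of_hasDerivAt (fun s _ => hFderiv s) (hEint τ t)
  -- the primitive A
  set A : ℝ → ℂ := fun s => ∫ τ in (0:ℝ)..s, G' τ with hA_def
  have hG'ii : IntervalIntegrable G' volume 0 t := by
    apply IntegrableOn.intervalIntegrable
    rwa [Set.uIcc_of_le ht]
  have hAcont : ContinuousOn A (Set.Icc 0 t) := by
    have := intervalIntegral.continuousOn_primitive_interval (a := (0:ℝ)) (b := t) (f := G')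
      (μ := volume) (by rwa [Set.uIcc_of_le ht])
    rwa [Set.uIcc_of_le ht] at this
  -- rewrite the integrand using hFTC
  have h1 : (∫ s in (0:ℝ)..t, G s * E s)
      = ∫ s in (0:ℝ)..t, (G 0 + A s) * E s := by
    apply intervalIntegral.integral_congr
    intro s hs
    rw [Set.uIcc_of_le ht] at hs
    dsimp only
    rw [hFTC s hs]
  -- integrabilities on [0,t]
  have hint1 : IntervalIntegrable (fun s => G 0 * E s) volume 0 t :=
    (continuous_const.mul hEcont).intervalIntegrable 0 t
  have hint2 : IntervalIntegrable (fun s => A s * E s) volume 0 t := by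
    apply ContinuousOn.intervalIntegrable
    rw [Set.uIcc_of_le ht]
    exact hAcont.mul hEcont.continuousOn
  have h2 : (∫ s in (0:ℝ)..t, (G 0 + A s) * E s)
      = (∫ s in (0:ℝ)..t, G 0 * E s) + ∫ s in (0:ℝ)..t, A s * E s := by
    have : (fun s => (G 0 + A s) * E s) = fun s => G 0 * E s + A s * E s := by
      funext s; ring
    rw [this]
    exact intervalIntegral.integral_add hint1 hint2
  have h3 : (∫ s in (0:ℝ)..t, G 0 * E s) = G 0 * (F t - F 0) := by
    rw [intervalIntegral.integral_const_mul, hEftc 0]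
  -- the Fubini swap
  set μ : Measure ℝ := volume.restrict (Set.Ioc (0:ℝ) t) with hμ_def
  haveI : IsFiniteMeasure μ := by
    constructor
    rw [hμ_def, Measure.restrict_apply_univ]
    exact measure_Ioc_lt_top
  have hG'meas : AEStronglyMeasurable G' μ :=
    (hInt.mono_set Set.Ioc_subset_Icc_self).aestronglyMeasurable
  have hG'bμ : ∀ᵐ τ ∂μ, ‖G' τ‖ ≤ B * γ :=
    ae_restrict_of_ae_restrict_of_subset Set.Ioc_subset_Icc_self hG'b
  set f : ℝ × ℝ → ℂ :=
    fun p => Set.indicator {q : ℝ × ℝ | q.2 ≤ q.1} (fun q => G' q.2 * E q.1) p with hf_def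
  have hSmeas : MeasurableSet {q : ℝ × ℝ | q.2 ≤ q.1} :=
    measurableSet_le measurable_snd measurable_fst
  have hfmeas : AEStronglyMeasurable f (μ.prod μ) := by
    apply AEStronglyMeasurable.indicator _ hSmeas
    exact (hG'meas.comp_snd (μ := μ)).mul (hEcont.comp continuous_fst).aestronglyMeasurable
  have hbnd : ∀ᵐ p : ℝ × ℝ ∂μ.prod μ, ‖G' p.2‖ ≤ B * γ := by
    rw [ae_iff] at hG'bμ ⊢
    have hset : {p : ℝ × ℝ | ¬‖G' p.2‖ ≤ B * γ}
        = Set.univ ×ˢ {τ : ℝ | ¬‖G' τ‖ ≤ B * γ} := by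
      ext p; simp [Set.mem_prod]
    rw [hset, Measure.prod_prod, hG'bμ, mul_zero]
  have hfint : Integrable f (μ.prod μ) := by
    apply Integrable.mono' (integrable_const (B * γ)) hfmeas
    filter_upwards [hbnd] with p hp
    calc ‖f p‖ ≤ ‖G' p.2 * E p.1‖ := by
          rw [hf_def]; exact norm_indicator_le_norm_self _ p
      _ = ‖G' p.2‖ * ‖E p.1‖ := norm_mul _ _
      _ ≤ B * γ := by rw [hEnorm, mul_one]; exact hp
  have hswap : (∫ s, ∫ τ, f (s, τ) ∂μ ∂μ) = ∫ τ, ∫ s, f (s, τ) ∂μ ∂μ := by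
    apply integral_integral_swap
    exact hfint
  -- identify left iterated integral
  have hleft : (∫ s, ∫ τ, f (s, τ) ∂μ ∂μ) = ∫ s, A s * E s ∂μ := by
    rw [hμ_def]
    apply setIntegral_congr_fun measurableSet_Ioc
    intro s hs
    dsimp only
    have hind : (fun τ => f (s, τ)) = Set.indicator (Set.Iic s) (fun τ => G' τ * E s) := by
      funext τ
      rw [hf_def]
      by_cases h : τ ≤ s <;> simp [Set.indicator, h]
    rw [hind, integral_indicator measurableSet_Iic, Measure.restrict_restrict measurableSet_Iic]
    have hcap : Set.Iic s ∩ Set.Ioc 0 t = Set.Ioc 0 s := by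
      ext x
      simp only [Set.mem_inter_iff, Set.mem_Iic, Set.mem_Ioc]
      constructor
      · rintro ⟨h1, h2, h3⟩; exact ⟨h2, h1⟩
      · rintro ⟨h1, h2⟩; exact ⟨h2, h1, le_trans h2 hs.2⟩
    rw [hcap, integral_mul_const, hA_def]
    dsimp only
    rw [intervalIntegral.integral_of_le hs.1.le]
  -- identify right iterated integral
  have hright : (∫ τ, ∫ s, f (s, τ) ∂μ ∂μ) = ∫ τ, G' τ * (F t - F τ) ∂μ := by
    rw [hμ_def]
    apply setIntegral_congr_fun measurableSet_Ioc
    intro τ hτ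
    dsimp only
    have hind : (fun s => f (s, τ)) = Set.indicator (Set.Ici τ) (fun s => G' τ * E s) := by
      funext s
      rw [hf_def]
      by_cases h : τ ≤ s <;> simp [Set.indicator, h]
    rw [hind, integral_indicator measurableSet_Ici, Measure.restrict_restrict measurableSet_Ici]
    have hcap : Set.Ici τ ∩ Set.Ioc 0 t = Set.Icc τ t := by
      ext x
      simp only [Set.mem_inter_iff, Set.mem_Ici, Set.mem_Ioc, Set.mem_Icc]
      constructor
      · rintro ⟨h1, _, h3⟩; exact ⟨h1, h3⟩
      · rintro ⟨h1, h2⟩; exact ⟨h1, lt_of_lt_of_le hτ.1 h1, h2⟩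
    rw [hcap, integral_Icc_eq_integral_Ioc, integral_const_mul,
      ← intervalIntegral.integral_of_le hτ.2, hEftc τ]
  -- put together
  have hA' : (∫ s in (0:ℝ)..t, A s * E s) = ∫ τ in (0:ℝ)..t, G' τ * (F t - F τ) := by
    rw [intervalIntegral.integral_of_le ht, intervalIntegral.integral_of_le ht]
    rw [← hμ_def]
    rw [← hleft, hswap, hright]
  -- split the right integral
  have hFii : IntervalIntegrable (fun τ => G' τ * F τ) volume 0 t := by
    rw [intervalIntegrable_iff, Set.uIoc_of_le ht]
    have : (fun τ => G' τ * F τ) = fun τ => F τ * G' τ := by funext τ; ring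
    rw [this]
    apply Integrable.bdd_mul (hInt.mono_set Set.Ioc_subset_Icc_self)
      ((hEcont.div_const c).aestronglyMeasurable)
    exact Filter.Eventually.of_forall (fun x => le_of_eq (hFnorm x))
  have hFtii : IntervalIntegrable (fun τ => G' τ * F t) volume 0 t :=
    hG'ii.mul_const (F t)
  have hsplit : (∫ τ in (0:ℝ)..t, G' τ * (F t - F τ))
      = (G t - G 0) * F t - ∫ τ in (0:ℝ)..t, G' τ * F τ := by
    have heq : (fun τ => G' τ * (F t - F τ)) = fun τ => G' τ * F t - G' τ * F τ := by
      funext τ; ring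
    rw [heq, intervalIntegral.integral_sub hFtii hFii, intervalIntegral.integral_mul_const]
    have : (∫ τ in (0:ℝ)..t, G' τ) = G t - G 0 := by
      have := hFTC t ⟨le_refl 0 |>.trans ht, le_refl t⟩
      rw [this]; ring
    rw [this]
  -- combine all identities
  have htotal : (∫ s in (0:ℝ)..t, G s * E s)
      = G t * F t - G 0 * F 0 - ∫ τ in (0:ℝ)..t, G' τ * F τ := by
    rw [h1, h2, h3, hA', hsplit]
    ring
  -- final bound
  have hGt : ‖G t‖ ≤ B := hGb t ⟨ht, le_refl t⟩
  have hG0 : ‖G 0‖ ≤ B := hGb 0 ⟨le_refl 0, ht⟩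
  have hIbnd : ‖∫ τ in (0:ℝ)..t, G' τ * F τ‖ ≤ B * γ / |ω| * t := by
    rw [intervalIntegral.integral_of_le ht, ← hμ_def]
    calc ‖∫ τ, G' τ * F τ ∂μ‖ ≤ ∫ _τ, B * γ / |ω| ∂μ := by
          apply norm_integral_le_of_norm_le (integrable_const _)
          filter_upwards [hG'bμ] with τ hτ
          rw [norm_mul, hFnorm]
          calc ‖G' τ‖ * (1 / |ω|) ≤ B * γ * (1 / |ω|) := by
                apply mul_le_mul_of_nonneg_right hτ
                positivity
            _ = B * γ / |ω| := by ring
      _ = B * γ / |ω| * t := by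
          rw [integral_const, hμ_def, measureReal_restrict_apply_univ, Real.volume_real_Ioc_of_le ht,
            smul_eq_mul, sub_zero, mul_comm]
  have hEeq : (∫ s in (0:ℝ)..t, G s * Complex.exp (-(Complex.I * (ω : ℂ) * ((t : ℂ) - (s : ℂ)))))
      = ∫ s in (0:ℝ)..t, G s * E s := rfl
  rw [hEeq, htotal]
  calc ‖G t * F t - G 0 * F 0 - ∫ τ in (0:ℝ)..t, G' τ * F τ‖
      ≤ ‖G t * F t - G 0 * F 0‖ + ‖∫ τ in (0:ℝ)..t, G' τ * F τ‖ := norm_sub_le _ _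
    _ ≤ (‖G t * F t‖ + ‖G 0 * F 0‖) + B * γ / |ω| * t := by
        gcongr
        exact norm_sub_le _ _
    _ ≤ (B * (1 / |ω|) + B * (1 / |ω|)) + B * γ / |ω| * t := by
        gcongr <;> rw [norm_mul, hFnorm] <;> gcongr
    _ = B * (2 + γ * t) / |ω| := by field_simp; ring
end
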